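/- Let r ∈ (0, 1/2) and s ∈ (1/2, 1) be real numbers, and consider the vectors u = (r − 1, −s) and v = (1 − r, −s) in the Euclidean plane ℝ². Then the angle between u and v lies strictly between arccos(3/5) and arccos(−3/5); in particular it is strictly less than 3π/4 (i.e. 135°). -/

import Mathlib

/-- The vector `(a, b)` in the Euclidean plane `ℝ²`. -/
noncomputable def vec2 (a b : ℝ) : EuclideanSpace ℝ (Fin 2) :=
  (WithLp.equiv 2 (Fin 2 → ℝ)).symm ![a, b]

/-- For `r ∈ (0, 1/2)` and `s ∈ (1/2, 1)`, the angle between `u = (r − 1, −s)` and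
`v = (1 − r, −s)` lies strictly between `arccos(3/5)` and `arccos(−3/5)`;
in particular it is strictly less than `3π/4`. -/
theorem stmt1 (r s : ℝ) (hr : r ∈ Set.Ioo (0 : ℝ) (1 / 2))
    (hs : s ∈ Set.Ioo (1 / 2 : ℝ) 1)
    (u v : EuclideanSpace ℝ (Fin 2))
    (hu : u = vec2 (r - 1) (-s)) (hv : v = vec2 (1 - r) (-s)) :
    Real.arccos (3 / 5) < InnerProductGeometry.angle u v ∧
    InnerProductGeometry.angle u v < Real.arccos (-(3 / 5)) ∧
    InnerProductGeometry.angle u v < 3 * Real.pi / 4 := by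
  obtain ⟨hr0, hr1⟩ := hr
  obtain ⟨hs0, hs1⟩ := hs
  have hd : (0:ℝ) < (1 - r)^2 + s^2 := by nlinarith
  set c : ℝ := (s^2 - (1 - r)^2) / ((1 - r)^2 + s^2) with hc
  have hinner : (inner ℝ u v : ℝ) = s^2 - (1 - r)^2 := by
    rw [hu, hv]
    simp [vec2, PiLp.inner_apply, Fin.sum_univ_two]
    ring
  have hnu : ‖u‖ = Real.sqrt ((1 - r)^2 + s^2) := by
    rw [hu, EuclideanSpace.norm_eq]
    congr 1
    simp [vec2, Fin.sum_univ_two, sq_abs]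
    try ring
  have hnv : ‖v‖ = Real.sqrt ((1 - r)^2 + s^2) := by
    rw [hv, EuclideanSpace.norm_eq]
    congr 1
    simp [vec2, Fin.sum_univ_two, sq_abs]
    try ring
  have key : InnerProductGeometry.angle u v = Real.arccos c := by
    rw [InnerProductGeometry.angle, hinner, hnu, hnv, Real.mul_self_sqrt hd.le]
  have hclt : c < 3 / 5 := by
    rw [hc, div_lt_iff₀ hd]
    nlinarith
  have hcgt : -(3 / 5) < c := by
    rw [hc, lt_div_iff₀ hd]
    nlinarith
  have h35 : (3/5 : ℝ) ∈ Set.Icc (-1:ℝ) 1 := by constructor <;> norm_num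
  have hn35 : (-(3/5) : ℝ) ∈ Set.Icc (-1:ℝ) 1 := by constructor <;> norm_num
  have hcmem : c ∈ Set.Icc (-1:ℝ) 1 := by
    constructor <;> nlinarith
  have h1 : Real.arccos (3/5) < Real.arccos c :=
    Real.strictAntiOn_arccos hcmem h35 hclt
  have h2 : Real.arccos c < Real.arccos (-(3/5)) :=
    Real.strictAntiOn_arccos hn35 hcmem hcgt
  refine ⟨by rw [key]; exact h1, by rw [key]; exact h2, ?_⟩
  rw [key]
  have h3 : Real.arccos (-(3/5)) < 3 * Real.pi / 4 := by
    have hneg : Real.arccos (-(3/5)) = Real.pi - Real.arccos (3/5) :=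
      Real.arccos_neg (3/5)
    have hpi4 : Real.arccos (Real.sqrt 2 / 2) = Real.pi / 4 := by
      rw [← Real.cos_pi_div_four, Real.arccos_cos (by linarith [Real.pi_pos])
        (by linarith [Real.pi_pos])]
    have hlt : (3/5 : ℝ) < Real.sqrt 2 / 2 := by
      have : (6/5 : ℝ) < Real.sqrt 2 := by
        rw [show (6/5 : ℝ) = Real.sqrt ((6/5)^2) by
          rw [Real.sqrt_sq (by norm_num)]]
        exact Real.sqrt_lt_sqrt (by norm_num) (by norm_num)
      linarith
    have hsq : Real.sqrt 2 < 3/2 := by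
      rw [show (3/2 : ℝ) = Real.sqrt ((3/2)^2) by rw [Real.sqrt_sq (by norm_num)]]
      exact Real.sqrt_lt_sqrt (by norm_num) (by norm_num)
    have hs2 : Real.sqrt 2 / 2 ∈ Set.Icc (-1:ℝ) 1 :=
      ⟨by linarith [Real.sqrt_nonneg 2], by linarith⟩
    have : Real.arccos (Real.sqrt 2 / 2) < Real.arccos (3/5) :=
      Real.strictAntiOn_arccos h35 hs2 hlt
    rw [hpi4] at this
    rw [hneg]
    linarith
  linarith
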